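/- arXiv:2002.02223 — 3 statements merged into one kernel-verified Lean document; each statement's English description precedes it below -/
import Mathlib

section
/- Let n ≥ 5. Any subgroup G of the symmetric group S_n that is isomorphic to S_{n-1} is mapped by some automorphism of S_n onto the stabilizer of the point n, i.e. onto {f ∈ S_n : f(n) = n}. -/
open Equiv Equiv.Perm

private def permMulCongr {α β : Type*} (e : α ≃ β) : Equiv.Perm α ≃* Equiv.Perm β :=
  { e.permCongr with
    map_mul' := fun p q => by
      ext x
      simp [Equiv.Perm.mul_apply] }

private lemma threeCycle_of_two_swaps {α : Type*} [Fintype α] [DecidableEq α]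
    (h5 : 5 ≤ Fintype.card α) (K : Subgroup (Equiv.Perm α)) (hK : K.Normal)
    {a b c d : α} (hab : a ≠ b) (hcd : c ≠ d) (hne : Equiv.swap a b ≠ Equiv.swap c d)
    (hmem : Equiv.swap a b * Equiv.swap c d ∈ K) :
    ∃ t ∈ K, Equiv.Perm.IsThreeCycle t := by
  by_cases h : a = c ∨ a = d ∨ b = c ∨ b = d
  · refine ⟨Equiv.swap a b * Equiv.swap c d, hmem, ?_⟩
    rcases h with h | h | h | h
    · subst h
      exact isThreeCycle_swap_mul_swap_same hab hcd fun hbd => hne (by rw [hbd])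
    · subst h
      rw [Equiv.swap_comm c a]
      exact isThreeCycle_swap_mul_swap_same hab hcd.symm
        fun hbc => hne (by rw [hbc, Equiv.swap_comm a c])
    · subst h
      rw [Equiv.swap_comm a b]
      exact isThreeCycle_swap_mul_swap_same hab.symm hcd
        fun had => hne (by rw [had, Equiv.swap_comm b d])
    · subst h
      rw [Equiv.swap_comm a b, Equiv.swap_comm c b]
      exact isThreeCycle_swap_mul_swap_same hab.symm (fun hbc => hcd (hbc.symm))
        fun hac => hne (by rw [hac, Equiv.swap_comm c b])
  · push_neg at h
    obtain ⟨hac, had, hbc, hbd⟩ := h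
    -- find a fresh point u
    have h4 : ({a, b, c, d} : Finset α).card ≤ 4 := by
      refine (Finset.card_insert_le _ _).trans (Nat.succ_le_succ ?_)
      refine (Finset.card_insert_le _ _).trans (Nat.succ_le_succ ?_)
      exact (Finset.card_insert_le _ _).trans (by simp)
    have hcompl : (({a, b, c, d} : Finset α)ᶜ).Nonempty := by
      rw [← Finset.card_pos, Finset.card_compl]
      omega
    obtain ⟨u, hu⟩ := hcompl
    simp only [Finset.mem_compl, Finset.mem_insert, Finset.mem_singleton, not_or] at hu
    obtain ⟨hua, hub, huc, hud⟩ := hu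
    have h1 : Equiv.swap a u * (Equiv.swap a b * Equiv.swap c d) * (Equiv.swap a u)⁻¹ *
        (Equiv.swap a b * Equiv.swap c d)⁻¹ ∈ K :=
      mul_mem (hK.conj_mem _ hmem _) (inv_mem hmem)
    have e1 : Equiv.swap a u * Equiv.swap a b * (Equiv.swap a u)⁻¹ = Equiv.swap u b := by
      rw [← Equiv.swap_apply_apply, Equiv.swap_apply_left,
        Equiv.swap_apply_of_ne_of_ne hab.symm (fun h => hub h.symm)]
    have e2 : Equiv.swap a u * Equiv.swap c d * (Equiv.swap a u)⁻¹ = Equiv.swap c d := by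
      rw [← Equiv.swap_apply_apply,
        Equiv.swap_apply_of_ne_of_ne (fun h => hac h.symm) (fun h => huc h.symm),
        Equiv.swap_apply_of_ne_of_ne (fun h => had h.symm) (fun h => hud h.symm)]
    have key : Equiv.swap a u * (Equiv.swap a b * Equiv.swap c d) * (Equiv.swap a u)⁻¹ *
        (Equiv.swap a b * Equiv.swap c d)⁻¹ = Equiv.swap b u * Equiv.swap b a := by
      calc Equiv.swap a u * (Equiv.swap a b * Equiv.swap c d) * (Equiv.swap a u)⁻¹ *
            (Equiv.swap a b * Equiv.swap c d)⁻¹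
          = (Equiv.swap a u * Equiv.swap a b * (Equiv.swap a u)⁻¹) *
            (Equiv.swap a u * Equiv.swap c d * (Equiv.swap a u)⁻¹) *
            ((Equiv.swap c d)⁻¹ * (Equiv.swap a b)⁻¹) := by group
        _ = Equiv.swap u b * (Equiv.swap c d * (Equiv.swap c d * Equiv.swap a b)) := by
            rw [e1, e2, Equiv.swap_inv, Equiv.swap_inv]
            group
        _ = Equiv.swap u b * Equiv.swap a b := by
            rw [← mul_assoc (Equiv.swap c d), Equiv.swap_mul_self, one_mul]
        _ = Equiv.swap b u * Equiv.swap b a := by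
            rw [Equiv.swap_comm u b, Equiv.swap_comm a b]
    rw [key] at h1
    exact ⟨_, h1, isThreeCycle_swap_mul_swap_same (fun h => hub h.symm) hab.symm hua⟩

private lemma alternating_le_of_normal {α : Type*} [Fintype α] [DecidableEq α]
    (h5 : 5 ≤ Fintype.card α) (K : Subgroup (Equiv.Perm α)) [hK : K.Normal]
    (hne : K ≠ ⊥) : alternatingGroup α ≤ K := by
  obtain ⟨σ, hσK, hσ1⟩ : ∃ σ ∈ K, σ ≠ 1 := by
    by_contra h
    push_neg at h
    exact hne ((Subgroup.eq_bot_iff_forall K).mpr h)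
  obtain ⟨x, hx⟩ : ∃ x, σ x ≠ x := by
    by_contra h
    push_neg at h
    exact hσ1 (Equiv.ext h)
  obtain ⟨z, hzx, hzy⟩ : ∃ z, z ≠ x ∧ z ≠ σ x := by
    have h2 : ({x, σ x} : Finset α).card ≤ 2 := (Finset.card_insert_le _ _).trans (by simp)
    have hcompl : (({x, σ x} : Finset α)ᶜ).Nonempty := by
      rw [← Finset.card_pos, Finset.card_compl]
      omega
    obtain ⟨z, hz⟩ := hcompl
    simp only [Finset.mem_compl, Finset.mem_insert, Finset.mem_singleton, not_or] at hz
    exact ⟨z, hz.1, hz.2⟩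
  have hc : Equiv.swap x z * σ * (Equiv.swap x z)⁻¹ * σ⁻¹ ∈ K :=
    mul_mem (hK.conj_mem σ hσK _) (inv_mem hσK)
  have hceq : Equiv.swap x z * σ * (Equiv.swap x z)⁻¹ * σ⁻¹ =
      Equiv.swap x z * Equiv.swap (σ x) (σ z) := by
    rw [Equiv.swap_apply_apply, Equiv.swap_inv]
    group
  rw [hceq] at hc
  have hxz : x ≠ z := fun h => hzx h.symm
  have hσxz : σ x ≠ σ z := fun h => hxz (σ.injective h)
  have hswapne : Equiv.swap x z ≠ Equiv.swap (σ x) (σ z) := by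
    intro h
    have hval : Equiv.swap x z x = Equiv.swap (σ x) (σ z) x := by rw [h]
    rw [Equiv.swap_apply_left] at hval
    by_cases hx2 : x = σ z
    · rw [show Equiv.swap (σ x) (σ z) x = Equiv.swap (σ x) (σ z) (σ z) from by rw [← hx2],
        Equiv.swap_apply_right] at hval
      exact hzy hval
    · rw [Equiv.swap_apply_of_ne_of_ne (fun h' => hx h'.symm) hx2] at hval
      exact hxz hval.symm
  obtain ⟨t, htK, ht3⟩ := threeCycle_of_two_swaps h5 K hK hxz hσxz hswapne hc
  rw [← Equiv.Perm.closure_three_cycles_eq_alternating, Subgroup.closure_le]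
  intro g hg
  have hconj : IsConj t g := isConj_iff_cycleType_eq.mpr (ht3.trans hg.symm)
  obtain ⟨cc, hcc⟩ := isConj_iff.mp hconj
  exact hcc ▸ hK.conj_mem t htK cc

theorem stmt_0 (n : ℕ) (hn : 5 ≤ n) (G : Subgroup (Equiv.Perm (Fin n)))
    (hG : Nonempty (G ≃* Equiv.Perm (Fin (n - 1)))) :
    ∃ φ : Equiv.Perm (Fin n) ≃* Equiv.Perm (Fin n),
      G.map φ.toMonoidHom =
        MulAction.stabilizer (Equiv.Perm (Fin n)) (⟨n - 1, by omega⟩ : Fin n) := by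
  classical
  set t : Fin n := ⟨n - 1, by omega⟩ with ht
  have hcardPerm : Nat.card (Equiv.Perm (Fin n)) = n.factorial := by
    simp [Nat.card_eq_fintype_card, Fintype.card_perm]
  have hcardG : Nat.card G = (n - 1).factorial := by
    obtain ⟨e⟩ := hG
    rw [Nat.card_congr e.toEquiv]
    simp [Nat.card_eq_fintype_card, Fintype.card_perm]
  have hfac : n.factorial = n * (n - 1).factorial := by
    conv_lhs => rw [show n = (n - 1) + 1 by omega]
    rw [Nat.factorial_succ]
    congr 1
    omega
  have hpos := Nat.factorial_pos (n - 1)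
  have hindex : G.index = n := by
    have h := Subgroup.card_mul_index G
    rw [hcardG, hcardPerm, hfac] at h
    exact Nat.eq_of_mul_eq_mul_left hpos (by rw [h, mul_comm])
  have hcardX : Nat.card (Equiv.Perm (Fin n) ⧸ G) = n := G.index_eq_card.symm.trans hindex
  let q1 : Equiv.Perm (Fin n) ⧸ G := QuotientGroup.mk 1
  let e0 : (Equiv.Perm (Fin n) ⧸ G) ≃ Fin n := Finite.equivFinOfCardEq hcardX
  let e : (Equiv.Perm (Fin n) ⧸ G) ≃ Fin n := e0.trans (Equiv.swap (e0 q1) t)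
  have he : e q1 = t := by simp [e]
  let φ0 := MulAction.toPermHom (Equiv.Perm (Fin n)) (Equiv.Perm (Fin n) ⧸ G)
  have hker_le : φ0.ker ≤ G := by
    intro k hk
    rw [MonoidHom.mem_ker] at hk
    have h1 : k • q1 = q1 := by
      have : (φ0 k) q1 = (1 : Equiv.Perm (Equiv.Perm (Fin n) ⧸ G)) q1 := by rw [hk]
      exact this
    have h2 : (QuotientGroup.mk k : Equiv.Perm (Fin n) ⧸ G) = QuotientGroup.mk 1 := by
      rw [show q1 = (QuotientGroup.mk 1 : Equiv.Perm (Fin n) ⧸ G) from rfl,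
        MulAction.Quotient.smul_mk] at h1
      simpa using h1
    simpa using QuotientGroup.eq.mp h2
  have hkerbot : φ0.ker = ⊥ := by
    by_contra hneb
    have h5 : 5 ≤ Fintype.card (Fin n) := by simpa using hn
    have hle := alternating_le_of_normal h5 φ0.ker hneb
    have hA1 : Nat.card (alternatingGroup (Fin n)) ≤ Nat.card φ0.ker :=
      Subgroup.card_le_of_le hle
    have hA2 : Nat.card φ0.ker ≤ Nat.card G := Subgroup.card_le_of_le hker_le
    haveI : Nontrivial (Fin n) := ⟨⟨0, by omega⟩, ⟨1, by omega⟩, by simp [Fin.ext_iff]⟩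
    have h3 : 2 * Nat.card (alternatingGroup (Fin n)) = Nat.card (Equiv.Perm (Fin n)) := by
      rw [Nat.card_eq_fintype_card, Nat.card_eq_fintype_card]
      exact two_mul_card_alternatingGroup
    have hA3 : Nat.card φ0.ker ≤ (n - 1).factorial := hcardG ▸ hA2
    have key : n * (n - 1).factorial ≤ 2 * (n - 1).factorial := by
      rw [← hfac, ← hcardPerm, ← h3]
      exact Nat.mul_le_mul_left 2 (hA1.trans hA3)
    have key' : (n - 1).factorial * n ≤ (n - 1).factorial * 2 := by
      rw [mul_comm _ n, mul_comm _ 2]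
      exact key
    have := Nat.le_of_mul_le_mul_left key' hpos
    omega
  let Φ : Equiv.Perm (Fin n) →* Equiv.Perm (Fin n) :=
    (permMulCongr e).toMonoidHom.comp φ0
  have hΦinj : Function.Injective Φ :=
    (permMulCongr e).injective.comp ((MonoidHom.ker_eq_bot_iff φ0).mp hkerbot)
  have hΦbij : Function.Bijective Φ := Finite.injective_iff_bijective.mp hΦinj
  let φ : Equiv.Perm (Fin n) ≃* Equiv.Perm (Fin n) := MulEquiv.ofBijective Φ hΦbij
  refine ⟨φ, ?_⟩
  have hle2 : G.map φ.toMonoidHom ≤ MulAction.stabilizer (Equiv.Perm (Fin n)) t := by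
    rintro _ ⟨g, hg, rfl⟩
    rw [MulAction.mem_stabilizer_iff]
    have hesymm : e.symm t = q1 := by rw [← he, Equiv.symm_apply_apply]
    have hgq1 : g • q1 = q1 := by
      show g • (QuotientGroup.mk 1 : Equiv.Perm (Fin n) ⧸ G) = QuotientGroup.mk 1
      rw [MulAction.Quotient.smul_mk]
      exact QuotientGroup.eq.mpr (by simpa using inv_mem hg)
    show φ g • t = t
    rw [Equiv.Perm.smul_def]
    show e ((φ0 g) (e.symm t)) = t
    rw [hesymm]
    show e (g • q1) = t
    rw [hgq1, he]
  haveI : MulAction.IsPretransitive (Equiv.Perm (Fin n)) (Fin n) :=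
    ⟨fun x y => ⟨Equiv.swap x y, by simp [Equiv.Perm.smul_def]⟩⟩
  have hstabindex : (MulAction.stabilizer (Equiv.Perm (Fin n)) t).index = n := by
    rw [MulAction.index_stabilizer_of_transitive]
    simp [Nat.card_eq_fintype_card, Fintype.card_perm]
  have hstabcard :
      Nat.card (MulAction.stabilizer (Equiv.Perm (Fin n)) t) = (n - 1).factorial := by
    have h := Subgroup.card_mul_index (MulAction.stabilizer (Equiv.Perm (Fin n)) t)
    rw [hstabindex, hcardPerm, hfac] at h
    have hn0 : 0 < n := by omega
    exact Nat.eq_of_mul_eq_mul_right hn0 (by rw [h, mul_comm])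
  have hmapcard : Nat.card (G.map φ.toMonoidHom) = (n - 1).factorial := by
    rw [← hcardG]
    exact (Nat.card_congr (G.equivMapOfInjective φ.toMonoidHom
      (MulEquiv.injective φ)).toEquiv).symm
  exact Subgroup.eq_of_le_of_card_ge hle2 (by rw [hmapcard, hstabcard])
end

section
/- Let n ≥ 5 with n ≠ 6. The automorphism group of the symmetric group S_n coincides with its inner automorphism group, i.e. Out(S_n) is trivial. -/
open Equiv Equiv.Perm Finset

variable {α : Type*} [Fintype α] [DecidableEq α]

instance instDP (a b : α) : DecidablePred (fun x : α => x ≠ a ∧ x ≠ b) :=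
  fun _ => instDecidableAnd

lemma sq_of_cycleType {σ : Perm α} {m : ℕ} (h : σ.cycleType = Multiset.replicate m 2) :
    σ * σ = 1 := by
  have h1 : orderOf σ ∣ 2 := by
    rw [← lcm_cycleType, h]
    refine Multiset.lcm_dvd.mpr fun x hx => ?_
    rw [Multiset.eq_of_mem_replicate hx]
  have := orderOf_dvd_iff_pow_eq_one.mp h1
  rwa [pow_two] at this

lemma mem_iff_of_inv {σ : Perm α} (h2 : σ * σ = 1) {a b : α} (hb : σ a = b) (x : α) :
    (x ≠ a ∧ x ≠ b) ↔ (σ x ≠ a ∧ σ x ≠ b) := by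
  have hinv : ∀ y, σ (σ y) = y := fun y => by
    have h3 : (σ * σ) y = y := by rw [h2]; rfl
    rwa [Perm.mul_apply] at h3
  have hba : σ b = a := by rw [← hb, hinv]
  constructor
  · rintro ⟨hxa, hxb⟩
    constructor
    · intro h; apply hxb; rw [← hinv x, h, hb]
    · intro h; apply hxa; rw [← hinv x, h, hba]
  · rintro ⟨h1, h3⟩
    constructor
    · rintro rfl; exact h3 hb
    · rintro rfl; exact h1 hba

lemma decomp {a b : α} (hab : a ≠ b) {σ : Perm α} (h2 : σ * σ = 1) (hb : σ a = b) :
    σ = swap a b * ofSubtype (σ.subtypePerm (p := fun x => x ≠ a ∧ x ≠ b) (fun x => (mem_iff_of_inv h2 hb x).symm)) := by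
  have hinv : ∀ y, σ (σ y) = y := fun y => by
    have h3 : (σ * σ) y = y := by rw [h2]; rfl
    rwa [Perm.mul_apply] at h3
  have hba : σ b = a := by rw [← hb, hinv]
  ext x
  by_cases hx : x ≠ a ∧ x ≠ b
  · rw [Perm.mul_apply, ofSubtype_apply_of_mem (p := fun x : α => x ≠ a ∧ x ≠ b) _ hx]
    have hmem := (mem_iff_of_inv h2 hb x).mp hx
    simp only [subtypePerm_apply]
    exact (swap_apply_of_ne_of_ne hmem.1 hmem.2).symm
  · push_neg at hx
    by_cases hxa : x = a
    · subst hxa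
      rw [Perm.mul_apply, ofSubtype_apply_of_not_mem _ (by simp), swap_apply_left, hb]
    · have hxb : x = b := hx hxa
      subst hxb
      rw [Perm.mul_apply, ofSubtype_apply_of_not_mem _ (by simp), swap_apply_right, hba]

lemma disjoint_swap_ofSubtype {a b : α} (hab : a ≠ b)
    (τ : Perm {x : α // x ≠ a ∧ x ≠ b}) : Perm.Disjoint (swap a b) (ofSubtype τ) := by
  intro x
  by_cases hx : x ≠ a ∧ x ≠ b
  · left; exact swap_apply_of_ne_of_ne hx.1 hx.2
  · right; exact ofSubtype_apply_of_not_mem _ hx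

lemma cycleType_swap_mul {a b : α} (hab : a ≠ b) (τ : Perm {x : α // x ≠ a ∧ x ≠ b}) :
    (swap a b * ofSubtype τ).cycleType = 2 ::ₘ τ.cycleType := by
  rw [(disjoint_swap_ofSubtype hab τ).cycleType_mul]
  have h1 : IsCycle (swap a b) := isCycle_swap hab
  rw [h1.cycleType, card_support_swap hab, cycleType_ofSubtype]
  rfl

def A (α : Type*) [Fintype α] [DecidableEq α] (k : ℕ) : ℕ :=
  (univ.filter fun σ : Perm α => σ.cycleType = Multiset.replicate k 2).card

lemma card_fiber_eq (a b : α) (hab : a ≠ b) (k : ℕ) :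
    ((univ : Finset (Perm α)).filter fun σ =>
       σ.cycleType = Multiset.replicate (k+1) 2 ∧ σ a = b).card
      = A {x : α // x ≠ a ∧ x ≠ b} k := by
  rw [A]
  have hrep : Multiset.replicate (k+1) 2 = 2 ::ₘ Multiset.replicate k 2 := rfl
  refine Finset.card_bij
    (fun σ hσ => σ.subtypePerm (p := fun x => x ≠ a ∧ x ≠ b) (fun x => (mem_iff_of_inv
      (sq_of_cycleType (Finset.mem_filter.mp hσ).2.1) (Finset.mem_filter.mp hσ).2.2 x).symm))
    ?_ ?_ ?_
  · intro σ hσ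
    obtain ⟨-, hct, hσa⟩ := Finset.mem_filter.mp hσ
    have hd := decomp hab (sq_of_cycleType hct) hσa
    rw [Finset.mem_filter]
    refine ⟨Finset.mem_univ _, ?_⟩
    have := cycleType_swap_mul hab (σ.subtypePerm (p := fun x => x ≠ a ∧ x ≠ b) (fun x => (mem_iff_of_inv (sq_of_cycleType hct) hσa x).symm))
    rw [← hd, hct, hrep] at this
    exact (Multiset.cons_inj_right _).mp this.symm
  · intro σ₁ h₁ σ₂ h₂ heq
    obtain ⟨-, hct₁, ha₁⟩ := Finset.mem_filter.mp h₁
    obtain ⟨-, hct₂, ha₂⟩ := Finset.mem_filter.mp h₂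
    rw [decomp hab (sq_of_cycleType hct₁) ha₁, decomp hab (sq_of_cycleType hct₂) ha₂]
    exact congrArg (fun τ => swap a b * ofSubtype τ) heq
  · intro τ hτ
    obtain ⟨-, hct⟩ := Finset.mem_filter.mp hτ
    set σ := swap a b * ofSubtype τ with hσdef
    have hσa : σ a = b := by
      rw [hσdef, Perm.mul_apply,
        ofSubtype_apply_of_not_mem (p := fun x : α => x ≠ a ∧ x ≠ b) _ (by simp),
        swap_apply_left]
    have hσct : σ.cycleType = Multiset.replicate (k+1) 2 := by
      rw [hσdef, cycleType_swap_mul hab, hct, hrep]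
    refine ⟨σ, Finset.mem_filter.mpr ⟨Finset.mem_univ _, hσct, hσa⟩, ?_⟩
    ext x
    have hx := x.2
    have h1 : σ (↑x) = ↑(τ x) := by
      rw [hσdef, Perm.mul_apply, ofSubtype_apply_of_mem (p := fun x : α => x ≠ a ∧ x ≠ b) _ hx]
      exact swap_apply_of_ne_of_ne (τ x).2.1 (τ x).2.2
    simp only [subtypePerm_apply]
    exact h1

lemma support_card_eq_offDiag (σ : Perm α) :
    σ.support.card = ((univ : Finset α).offDiag.filter fun p => σ p.1 = p.2).card := by
  refine Finset.card_nbij (fun a => (a, σ a)) ?_ ?_ ?_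
  · intro a ha
    rw [Finset.mem_coe, Finset.mem_filter, Finset.mem_offDiag]
    exact ⟨⟨Finset.mem_univ _, Finset.mem_univ _, (mem_support.mp ha).symm⟩, rfl⟩
  · intro a _ b _ h
    exact (Prod.mk.injEq _ _ _ _).mp h |>.1
  · intro p hp
    rw [Finset.coe_filter] at hp
    obtain ⟨hpo, hpe⟩ := hp
    rw [Finset.mem_offDiag] at hpo
    refine ⟨p.1, ?_, ?_⟩
    · rw [Finset.mem_coe, mem_support, hpe]
      exact hpo.2.2.symm
    · exact Prod.ext rfl hpe

lemma exists_perm_pair {a b c d : α} (hab : a ≠ b) (hcd : c ≠ d) :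
    ∃ π : Perm α, π a = c ∧ π b = d := by
  refine ⟨swap (swap a c b) d * swap a c, ?_, ?_⟩
  · rw [Perm.mul_apply, swap_apply_left]
    have h1 : c ≠ swap a c b := by
      intro h
      have h2 := congrArg (swap a c) h
      rw [swap_apply_right, swap_apply_self] at h2
      exact hab h2
    exact swap_apply_of_ne_of_ne h1 hcd
  · rw [Perm.mul_apply, swap_apply_left]

lemma card_fiber_const {a b c d : α} (hab : a ≠ b) (hcd : c ≠ d) (m : Multiset ℕ) :
    ((univ : Finset (Perm α)).filter fun σ => σ.cycleType = m ∧ σ a = b).card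
      = ((univ : Finset (Perm α)).filter fun σ => σ.cycleType = m ∧ σ c = d).card := by
  obtain ⟨π, hπa, hπb⟩ := exists_perm_pair hab hcd
  have hπinv : π⁻¹ c = a := by rw [← hπa, ← Perm.mul_apply, inv_mul_cancel, Perm.one_apply]
  refine Finset.card_nbij (fun σ => π * σ * π⁻¹) ?_ ?_ ?_
  · intro σ hσ
    rw [Finset.mem_coe, Finset.mem_filter] at hσ
    obtain ⟨-, hct, hval⟩ := hσ
    dsimp only
    rw [Finset.mem_coe, Finset.mem_filter]
    refine ⟨Finset.mem_univ _, ?_, ?_⟩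
    · rw [cycleType_conj, hct]
    · rw [Perm.mul_apply, Perm.mul_apply, hπinv, hval, hπb]
  · intro σ₁ _ σ₂ _ h
    simpa [mul_left_cancel_iff, mul_right_cancel_iff] using h
  · intro τ hτ
    rw [Finset.mem_coe, Finset.mem_filter] at hτ
    obtain ⟨-, hct, hval⟩ := hτ
    refine ⟨π⁻¹ * τ * π, ?_, by group⟩
    rw [Finset.mem_coe, Finset.mem_filter]
    refine ⟨Finset.mem_univ _, ?_, ?_⟩
    · rw [show π⁻¹ * τ * π = π⁻¹ * τ * π⁻¹⁻¹ by rw [inv_inv], cycleType_conj, hct]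
    · rw [Perm.mul_apply, Perm.mul_apply, hπa, hval, ← hπb, ← Perm.mul_apply, inv_mul_cancel, Perm.one_apply]

lemma card_subtype_ne_ne {a b : α} (hab : a ≠ b) :
    Fintype.card {x : α // x ≠ a ∧ x ≠ b} = Fintype.card α - 2 := by
  rw [Fintype.card_subtype]
  have h : (univ.filter fun x : α => x ≠ a ∧ x ≠ b) = univ \ {a, b} := by
    ext x
    simp [not_or]
  rw [h, Finset.card_sdiff_of_subset (by simp), Finset.card_pair hab, Finset.card_univ]

lemma A_rec (k : ℕ) (a b : α) (hab : a ≠ b) :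
    (2*(k+1)) * A α (k+1)
      = (Fintype.card α * Fintype.card α - Fintype.card α) * A {x : α // x ≠ a ∧ x ≠ b} k := by
  set T := (univ.filter fun σ : Perm α => σ.cycleType = Multiset.replicate (k+1) 2) with hT
  have h1 : ∀ σ ∈ T, σ.support.card = 2*(k+1) := by
    intro σ hσ
    rw [Finset.mem_filter] at hσ
    rw [← sum_cycleType, hσ.2, Multiset.sum_replicate, smul_eq_mul, mul_comm]
  have h2 : (2*(k+1)) * A α (k+1) = ∑ σ ∈ T, σ.support.card := by
    rw [Finset.sum_congr rfl h1, Finset.sum_const, smul_eq_mul, mul_comm]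
    rfl
  rw [h2]
  have h3 : ∑ σ ∈ T, σ.support.card
      = ∑ p ∈ (univ : Finset α).offDiag, (T.filter fun σ => σ p.1 = p.2).card := by
    simp only [support_card_eq_offDiag, Finset.card_filter]
    exact Finset.sum_comm
  rw [h3]
  have h4 : ∀ p ∈ (univ : Finset α).offDiag,
      (T.filter fun σ => σ p.1 = p.2).card = A {x : α // x ≠ a ∧ x ≠ b} k := by
    intro p hp
    rw [Finset.mem_offDiag] at hp
    rw [hT, Finset.filter_filter]
    rw [card_fiber_const hp.2.2 hab, card_fiber_eq a b hab k]
  rw [Finset.sum_congr rfl h4, Finset.sum_const, smul_eq_mul, Finset.offDiag_card,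
    Finset.card_univ]

lemma A_zero : A α 0 = 1 := by
  rw [A, Finset.card_eq_one]
  refine ⟨1, ?_⟩
  ext σ
  simp [Multiset.replicate_zero, cycleType_eq_zero]

universe u

lemma A_formula : ∀ (k : ℕ) (α : Type u) [Fintype α] [DecidableEq α],
    2*k ≤ Fintype.card α →
    2^k * Nat.factorial k * (A α k * Nat.factorial (Fintype.card α - 2*k))
      = Nat.factorial (Fintype.card α) := by
  intro k
  induction k with
  | zero =>
    intro α _ _ _
    simp [A_zero]
  | succ k ih =>
    intro α _ _ hle
    have hcard2 : 1 < Fintype.card α := by omega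
    obtain ⟨a, b, hab⟩ := Fintype.exists_pair_of_one_lt_card hcard2
    set n := Fintype.card α with hn
    have hβcard : Fintype.card {x : α // x ≠ a ∧ x ≠ b} = n - 2 := card_subtype_ne_ne hab
    have hβle : 2*k ≤ Fintype.card {x : α // x ≠ a ∧ x ≠ b} := by rw [hβcard]; omega
    have hih := ih {x : α // x ≠ a ∧ x ≠ b} hβle
    rw [hβcard] at hih
    have hrec := A_rec k a b hab
    rw [← hn] at hrec
    have hpos : 0 < 2*(k+1) := by omega
    apply Nat.eq_of_mul_eq_mul_left hpos
    calc (2*(k+1)) * (2^(k+1) * Nat.factorial (k+1) * (A α (k+1) * Nat.factorial (n - 2*(k+1))))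
        = 2^(k+1) * Nat.factorial (k+1) * ((2*(k+1)) * A α (k+1))
            * Nat.factorial (n - 2*(k+1)) := by ring
      _ = 2^(k+1) * Nat.factorial (k+1) * ((n*n - n) * A {x : α // x ≠ a ∧ x ≠ b} k)
            * Nat.factorial (n - 2*(k+1)) := by rw [hrec]
      _ = (2*(k+1)) * ((n*n-n) * (2^k * Nat.factorial k
            * (A {x : α // x ≠ a ∧ x ≠ b} k * Nat.factorial ((n-2) - 2*k)))) := by
            rw [pow_succ, Nat.factorial_succ]
            have h5 : n - 2*(k+1) = (n-2) - 2*k := by omega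
            rw [h5]; ring
      _ = (2*(k+1)) * ((n*n-n) * Nat.factorial (n-2)) := by rw [hih]
      _ = (2*(k+1)) * Nat.factorial n := by
            congr 1
            obtain ⟨m, hm⟩ : ∃ m, n = m + 2 := ⟨n - 2, by omega⟩
            rw [hm]
            have h1 : (m+2)*(m+2) - (m+2) = (m+2)*(m+1) := by
              have h2 : (m+2)*(m+2) = (m+2)*(m+1) + (m+2) := by ring
              omega
            have h3 : m+2-2 = m := by omega
            rw [h1, h3, show (m+2).factorial = (m+2)*((m+1)*m.factorial) by
              rw [Nat.factorial_succ, Nat.factorial_succ]]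
            ring

lemma aux_fact : ∀ k, 4 ≤ k → 2^k * Nat.factorial k < 2 * Nat.factorial (2*k-2) := by
  intro k
  induction k with
  | zero => omega
  | succ k ih =>
    intro hk
    rcases Nat.lt_or_ge k 4 with hk4 | hk4
    · have : k = 3 := by omega
      subst this
      decide
    · have h1 := ih hk4
      have h2 : 2*(k+1)-2 = 2*k := by omega
      have h3 : 2*k-2+1 = 2*k-1 := by omega
      have h4 : 2*k-1+1 = 2*k := by omega
      have h5 : Nat.factorial (2*k) = (2*k) * ((2*k-1) * Nat.factorial (2*k-2)) := by
        rw [← h4, ← h3, Nat.factorial_succ, Nat.factorial_succ, h3, h4]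
      rw [h2, pow_succ, Nat.factorial_succ, h5]
      have h6 : 2^k * ((k+1) * Nat.factorial k) * 2 = (2*(k+1)) * (2^k * Nat.factorial k) := by
        ring
      calc 2^k * 2 * ((k+1) * Nat.factorial k)
          = (2*(k+1)) * (2^k * Nat.factorial k) := by ring
        _ < (2*(k+1)) * (2 * Nat.factorial (2*k-2)) := by
            exact Nat.mul_lt_mul_of_pos_left h1 (by omega)
        _ ≤ 2 * ((2*k) * ((2*k-1) * Nat.factorial (2*k-2))) := by
            have h7 : (2*(k+1)) * (2 * Nat.factorial (2*k-2))
                = 2 * ((2*(k+1)) * Nat.factorial (2*k-2)) := by ring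
            rw [h7]
            apply Nat.mul_le_mul_left
            have h8 : (2*k) * ((2*k-1) * Nat.factorial (2*k-2))
                = ((2*k) * (2*k-1)) * Nat.factorial (2*k-2) := by ring
            rw [h8]
            apply Nat.mul_le_mul_right
            have h9 : 2*k*(2*k-1) = 2*k*(2*k) - 2*k := by
              have := Nat.mul_sub (2*k) (2*k) 1
              omega
            nlinarith [hk4]

lemma k_eq_one (α : Type*) [Fintype α] [DecidableEq α] {k : ℕ} (hn : 5 ≤ Fintype.card α)
    (hn6 : Fintype.card α ≠ 6) (hk : 1 ≤ k) (h2k : 2*k ≤ Fintype.card α)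
    (hA : A α k = A α 1) (hApos : 0 < A α k) : k = 1 := by
  by_contra hne
  have hk2 : 2 ≤ k := by omega
  set n := Fintype.card α with hndef
  have h1 := A_formula 1 α (by omega)
  have h2 := A_formula k α h2k
  rw [← hndef] at h1 h2
  rw [← hA] at h1
  have e := h1.trans h2.symm
  have e2 : (2 * Nat.factorial (n-2)) * A α k
      = (2^k * Nat.factorial k * Nat.factorial (n-2*k)) * A α k := by
    have hn2 : n - 2*1 = n - 2 := by omega
    calc (2 * Nat.factorial (n-2)) * A α k
        = 2^1 * Nat.factorial 1 * (A α k * Nat.factorial (n - 2*1)) := by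
          rw [hn2]; simp [Nat.factorial_one]; ring
      _ = 2^k * Nat.factorial k * (A α k * Nat.factorial (n - 2*k)) := e
      _ = (2^k * Nat.factorial k * Nat.factorial (n-2*k)) * A α k := by ring
  have e3 : 2 * Nat.factorial (n-2) = 2^k * Nat.factorial k * Nat.factorial (n-2*k) :=
    Nat.eq_of_mul_eq_mul_right hApos e2
  have hdfle : 2*k-2 ≤ n-2 := by omega
  have hdf := Nat.factorial_mul_descFactorial hdfle
  have hsub : n - 2 - (2*k-2) = n - 2*k := by omega
  rw [hsub] at hdf
  set D := (n-2).descFactorial (2*k-2) with hD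
  have e4 : (2 * D) * Nat.factorial (n - 2*k)
      = (2^k * Nat.factorial k) * Nat.factorial (n-2*k) := by
    calc (2 * D) * Nat.factorial (n-2*k) = 2 * (Nat.factorial (n-2*k) * D) := by ring
      _ = 2 * Nat.factorial (n-2) := by rw [hdf]
      _ = 2^k * Nat.factorial k * Nat.factorial (n-2*k) := e3
  have e5 : 2 * D = 2^k * Nat.factorial k :=
    Nat.eq_of_mul_eq_mul_right (Nat.factorial_pos _) e4
  clear_value D
  rcases Nat.lt_or_ge k 4 with hk4 | hk4
  · interval_cases k
    · -- k = 2
      have hge : (6:ℕ) ≤ D := by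
        rw [hD]
        calc (6:ℕ) = (3:ℕ).descFactorial 2 := by decide
          _ ≤ (n-2).descFactorial (2*2-2) := Nat.descFactorial_le _ (by omega)
      have e5' : 2 * D = 8 := by rw [e5]; decide
      omega
    · -- k = 3
      have hn7 : 7 ≤ n := by omega
      have hge : (120:ℕ) ≤ D := by
        rw [hD]
        calc (120:ℕ) = (5:ℕ).descFactorial 4 := by decide
          _ ≤ (n-2).descFactorial (2*3-2) := Nat.descFactorial_le _ (by omega)
      have e5' : 2 * D = 48 := by rw [e5]; decide
      omega
  · have hge : Nat.factorial (2*k-2) ≤ D := by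
      rw [hD, ← Nat.descFactorial_self (2*k-2)]
      exact Nat.descFactorial_le _ (by omega)
    have := aux_fact k hk4
    omega

lemma cycleType_swap' {α : Type*} [Fintype α] [DecidableEq α] {a b : α} (h : a ≠ b) :
    (swap a b).cycleType = {2} := by
  have h1 : IsCycle (swap a b) := isCycle_swap h
  rw [h1.cycleType, card_support_swap h]

lemma card_class_eq {α : Type*} [Fintype α] [DecidableEq α]
    (φ : MulAut (Perm α)) (σ : Perm α) :
    ((univ : Finset (Perm α)).filter fun τ => τ.cycleType = σ.cycleType).card
      = ((univ : Finset (Perm α)).filter fun τ => τ.cycleType = (φ σ).cycleType).card := by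
  refine Finset.card_nbij (fun τ => φ τ) ?_ ?_ ?_
  · intro τ hτ
    rw [Finset.mem_coe, Finset.mem_filter] at hτ ⊢
    refine ⟨Finset.mem_univ _, ?_⟩
    rw [← isConj_iff_cycleType_eq] at hτ ⊢
    exact φ.toMonoidHom.map_isConj hτ.2
  · intro τ₁ _ τ₂ _ h
    exact φ.injective h
  · intro ρ hρ
    rw [Finset.mem_coe, Finset.mem_filter] at hρ
    refine ⟨φ.symm ρ, ?_, by simp⟩
    rw [Finset.mem_coe, Finset.mem_filter]
    refine ⟨Finset.mem_univ _, ?_⟩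
    rw [← isConj_iff_cycleType_eq] at hρ ⊢
    have := φ.symm.toMonoidHom.map_isConj hρ.2
    simpa using this

lemma swap_image_isSwap {α : Type*} [Fintype α] [DecidableEq α]
    (h5 : 5 ≤ Fintype.card α) (h6 : Fintype.card α ≠ 6)
    (φ : MulAut (Perm α)) {σ : Perm α} (hσ : σ.IsSwap) : (φ σ).IsSwap := by
  obtain ⟨a, b, hab, rfl⟩ := hσ
  have hne1 : swap a b ≠ 1 := by
    intro h
    have h2 : swap a b a = b := swap_apply_left a b
    rw [h] at h2
    simp only [Perm.coe_one, id_eq] at h2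
    exact hab h2
  have hord : orderOf (swap a b) = 2 := by
    apply orderOf_eq_prime
    · rw [pow_two, swap_mul_self]
    · exact hne1
  have hordφ : orderOf (φ (swap a b)) = 2 := by
    rw [show φ (swap a b) = φ.toMonoidHom (swap a b) from rfl,
      orderOf_injective φ.toMonoidHom φ.injective, hord]
  set k := Multiset.card (φ (swap a b)).cycleType with hk
  have hct : (φ (swap a b)).cycleType = Multiset.replicate k 2 := by
    rw [hk]
    apply Multiset.eq_replicate_card.mpr
    intro x hx
    have h1 : x ∣ 2 := by
      rw [← hordφ, ← lcm_cycleType]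
      exact Multiset.dvd_lcm hx
    have h2 : 2 ≤ x := two_le_of_mem_cycleType hx
    have h3 : x ≤ 2 := Nat.le_of_dvd (by norm_num) h1
    omega
  have hφne1 : φ (swap a b) ≠ 1 := by
    intro h
    exact hne1 (φ.injective (by rw [h, map_one]))
  have hk1 : 1 ≤ k := by
    rcases Nat.eq_zero_or_pos k with h | h
    · exfalso
      rw [h, Multiset.replicate_zero, cycleType_eq_zero] at hct
      exact hφne1 hct
    · exact h
  have h2k : 2*k ≤ Fintype.card α := by
    have h1 : (φ (swap a b)).cycleType.sum = (φ (swap a b)).support.card := sum_cycleType _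
    rw [hct, Multiset.sum_replicate, smul_eq_mul] at h1
    have h2 := Finset.card_le_univ (φ (swap a b)).support
    omega
  have hct1 : (swap a b).cycleType = Multiset.replicate 1 2 := by
    rw [cycleType_swap' hab]
    rfl
  have hA : A α k = A α 1 := by
    rw [A, A]
    have h1 := card_class_eq φ (swap a b)
    rw [hct, hct1] at h1
    exact h1.symm
  have hApos : 0 < A α k := by
    rw [A, Finset.card_pos]
    exact ⟨φ (swap a b), Finset.mem_filter.mpr ⟨Finset.mem_univ _, hct⟩⟩
  have hkeq := k_eq_one α h5 h6 hk1 h2k hA hApos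
  rw [hkeq] at hct
  rw [← card_support_eq_two]
  have hsum := sum_cycleType (φ (swap a b))
  rw [hct] at hsum
  simp only [Multiset.replicate_one, Multiset.sum_singleton] at hsum
  omega

lemma isSwap_eq_swap' {α : Type*} [DecidableEq α] {σ : Perm α} (h : σ.IsSwap) {a : α}
    (ha : σ a ≠ a) : σ = swap a (σ a) := by
  obtain ⟨u, v, huv, rfl⟩ := h
  rcases (Equiv.swap_apply_ne_self_iff.mp ha).2 with rfl | rfl
  · rw [swap_apply_left]
  · rw [swap_apply_right, swap_comm]

lemma swaps_share_point {α : Type*} [DecidableEq α] {p q : Perm α}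
    (h : p * q ≠ q * p) : ∃ x, p x ≠ x ∧ q x ≠ x := by
  by_contra hc
  push_neg at hc
  have hd : Perm.Disjoint p q := by
    intro x
    rcases Classical.em (p x = x) with h1 | h1
    · left; exact h1
    · right; exact hc x h1
  exact h hd.commute.eq

theorem main_inner (n : ℕ) (hn : 5 ≤ n) (φ : MulAut (Perm (Fin n)))
    (hswap : ∀ σ : Perm (Fin n), σ.IsSwap → (φ σ).IsSwap) :
    ∃ g : Perm (Fin n), φ = MulAut.conj g := by
  set z : Fin n := ⟨0, by omega⟩ with hz
  set o : Fin n := ⟨1, by omega⟩ with ho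
  set t : Fin n := ⟨2, by omega⟩ with ht
  have hzo : z ≠ o := by simp [hz, ho, Fin.ext_iff]
  have hzt : z ≠ t := by simp [hz, ht, Fin.ext_iff]
  have hot : o ≠ t := by simp [ho, ht, Fin.ext_iff]
  have hswapzz : swap z z = (1 : Perm (Fin n)) := by
    ext x; rw [swap_self]; rfl
  have hnc : ∀ i j : Fin n, i ≠ z → j ≠ z → i ≠ j →
      swap z i * swap z j ≠ swap z j * swap z i := by
    intro i j hi hj hij h
    have h1 : (swap z i * swap z j) j = i := by
      rw [Perm.mul_apply, swap_apply_right, swap_apply_left]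
    have h2 : (swap z j * swap z i) j = z := by
      rw [Perm.mul_apply, swap_apply_of_ne_of_ne hj hij.symm, swap_apply_right]
    rw [h, h2] at h1
    exact hi h1.symm
  have hsisw : ∀ i : Fin n, i ≠ z → (φ (swap z i)).IsSwap := by
    intro i hi
    exact hswap _ ⟨z, i, hi.symm, rfl⟩
  have hsnc : ∀ i j : Fin n, i ≠ z → j ≠ z → i ≠ j →
      φ (swap z i) * φ (swap z j) ≠ φ (swap z j) * φ (swap z i) := by
    intro i j hi hj hij h
    rw [← map_mul, ← map_mul] at h
    exact hnc i j hi hj hij (φ.injective h)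
  have hsinj : ∀ i j : Fin n, i ≠ j → swap z i ≠ swap z j := by
    intro i j hij h
    have h1 : swap z i z = i := swap_apply_left z i
    rw [h, swap_apply_left] at h1
    exact hij h1.symm
  -- find the common point a
  obtain ⟨a, hao, hat⟩ := swaps_share_point (hsnc o t hzo.symm hzt.symm hot)
  have key : ∀ i : Fin n, i ≠ z → φ (swap z i) a ≠ a := by
    intro i hi h
    by_cases hio : i = o
    · subst hio; exact hao h
    by_cases hit : i = t
    · subst hit; exact hat h
    set b := φ (swap z o) a with hb
    set c := φ (swap z t) a with hc
    have hba : b ≠ a := hao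
    have hca : c ≠ a := hat
    have hso : φ (swap z o) = swap a b := isSwap_eq_swap' (hsisw o hzo.symm) hao
    have hst : φ (swap z t) = swap a c := isSwap_eq_swap' (hsisw t hzt.symm) hat
    have hbc : b ≠ c := by
      intro hbceq
      apply hsinj o t hot
      apply φ.injective
      rw [hso, hst, hbceq]
    -- s i shares a point with s o
    obtain ⟨y, hy1, hy2⟩ := swaps_share_point (hsnc i o hi hzo.symm hio)
    have hyb : y = b := by
      rw [hso] at hy2
      rcases (Equiv.swap_apply_ne_self_iff.mp hy2).2 with rfl | rfl
      · exact absurd h hy1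
      · rfl
    subst hyb
    have hsib : φ (swap z i) b ≠ b := hy1
    -- s i shares a point with s t
    obtain ⟨w, hw1, hw2⟩ := swaps_share_point (hsnc i t hi hzt.symm hit)
    have hwc : w = c := by
      rw [hst] at hw2
      rcases (Equiv.swap_apply_ne_self_iff.mp hw2).2 with rfl | rfl
      · exact absurd h hw1
      · rfl
    subst hwc
    have hsic : φ (swap z i) c ≠ c := hw1
    have hsi : φ (swap z i) = swap b (φ (swap z i) b) :=
      isSwap_eq_swap' (hsisw i hi) hsib
    have hcval : c = φ (swap z i) b := by
      rw [hsi] at hsic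
      rcases (Equiv.swap_apply_ne_self_iff.mp hsic).2 with h' | h'
      · exact absurd h' hbc.symm
      · exact h'
    have hsibc : φ (swap z i) = swap b c := by rw [hsi, ← hcval]
    -- but swap b c = φ (swap o t)
    have hcomp1 : swap z o * swap z t * (swap z o)⁻¹ = swap o t := by
      rw [← swap_apply_apply, swap_apply_left, swap_apply_of_ne_of_ne hzt.symm hot.symm]
    have hcomp2 : swap a b * swap a c * (swap a b)⁻¹ = swap b c := by
      rw [← swap_apply_apply, swap_apply_left, swap_apply_of_ne_of_ne hca hbc.symm]
    have hφot : φ (swap o t) = swap b c := by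
      rw [← hcomp1, map_mul, map_mul, map_inv, hso, hst, hcomp2]
    have : swap z i = swap o t := φ.injective (by rw [hsibc, hφot])
    have h1 : swap z i z = i := swap_apply_left z i
    rw [this, swap_apply_of_ne_of_ne hzo hzt] at h1
    exact hi h1.symm
  -- build g
  set g' : Fin n → Fin n := fun i => φ (swap z i) a with hg'
  have hg'z : g' z = a := by
    rw [hg']
    simp only [hswapzz, map_one]
    rfl
  have hg'inj : Function.Injective g' := by
    intro i j h
    by_cases hi : i = z
    · subst hi
      by_cases hj : j = z
      · exact hj.symm
      · rw [hg'z] at h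
        exact absurd h.symm (key j hj)
    · by_cases hj : j = z
      · subst hj
        rw [hg'z] at h
        exact absurd h (key i hi)
      · by_contra hij
        apply hsinj i j hij
        apply φ.injective
        rw [isSwap_eq_swap' (hsisw i hi) (key i hi),
          isSwap_eq_swap' (hsisw j hj) (key j hj)]
        rw [hg'] at h
        simp only at h
        rw [h]
  have hg'bij : Function.Bijective g' := Finite.injective_iff_bijective.mp hg'inj
  set g : Perm (Fin n) := Equiv.ofBijective g' hg'bij with hgdef
  have hgapp : ∀ x, g x = φ (swap z x) a := fun x => rfl
  -- main claim
  have claim : ∀ x y : Fin n, φ (swap x y) = swap (g x) (g y) := by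
    intro x y
    by_cases hxy : x = y
    · subst hxy
      have h1 : swap x x = (1 : Perm (Fin n)) := by ext w; rw [swap_self]; rfl
      rw [h1, map_one, swap_self]
      rfl
    by_cases hx : x = z
    · subst hx
      have h1 := isSwap_eq_swap' (hsisw y (Ne.symm hxy)) (key y (Ne.symm hxy))
      have h2 : g z = a := hg'z
      have h3 : g y = φ (swap z y) a := rfl
      rw [h2, h3]
      exact h1
    by_cases hy : y = z
    · subst hy
      have h1 := isSwap_eq_swap' (hsisw x hx) (key x hx)
      have h2 : g z = a := hg'z
      have h3 : g x = φ (swap z x) a := rfl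
      rw [swap_comm x z, h1, h2, h3]
      exact swap_comm _ _
    -- both nonzero
    · have hxyne : x ≠ y := hxy
      have hcomp : swap z x * swap z y * (swap z x)⁻¹ = swap x y := by
        rw [← swap_apply_apply, swap_apply_left, swap_apply_of_ne_of_ne hy (Ne.symm hxyne)]
      have hsx := isSwap_eq_swap' (hsisw x hx) (key x hx)
      have hsy := isSwap_eq_swap' (hsisw y hy) (key y hy)
      have hgx : g x = φ (swap z x) a := rfl
      have hgy : g y = φ (swap z y) a := rfl
      have hgne : g y ≠ g x := fun h => hxyne (hg'inj h).symm
      have hcomp2 : swap a (g x) * swap a (g y) * (swap a (g x))⁻¹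
          = swap (g x) (g y) := by
        rw [← swap_apply_apply, swap_apply_left]
        congr 1
        apply swap_apply_of_ne_of_ne
        · rw [hgy]; exact key y hy
        · exact hgne
      rw [← hcomp, map_mul, map_mul, map_inv, hsx, hsy, ← hgx, ← hgy, hcomp2]
  -- conclude
  refine ⟨g, ?_⟩
  apply MulEquiv.ext
  intro σ
  have hmem : σ ∈ Subgroup.closure {τ : Perm (Fin n) | τ.IsSwap} := by
    rw [closure_isSwap]
    trivial
  induction hmem using Subgroup.closure_induction with
  | mem τ hτ =>
    obtain ⟨x, y, hxy, rfl⟩ := hτ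
    rw [claim x y, MulAut.conj_apply, ← swap_apply_apply]
  | one => rw [map_one, map_one]
  | mul σ₁ σ₂ h₁ h₂ ih₁ ih₂ => rw [map_mul, map_mul, ih₁, ih₂]
  | inv σ₁ h₁ ih₁ => rw [map_inv, map_inv, ih₁]

theorem stmt_5 (n : ℕ) (hn : 5 ≤ n) (hn6 : n ≠ 6)
    (φ : MulAut (Equiv.Perm (Fin n))) :
    ∃ g : Equiv.Perm (Fin n), φ = MulAut.conj g := by
  apply main_inner n hn φ
  intro σ hσ
  exact swap_image_isSwap (by rw [Fintype.card_fin]; exact hn)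
    (by rw [Fintype.card_fin]; exact hn6) φ hσ
end

section
/- In the group G = F² ⋊ S_3 where F = Z/2Z and S_3 acts on F² = F³/Δ by permuting coordinates of F³ (Δ the diagonal), all subgroups of order 6 are conjugate to each other. -/
/-- The diagonal subgroup `Δ = {0, (1,...,1)}` of `(ℤ/2ℤ)^m`. -/
def Dl (m : ℕ) : AddSubgroup (Fin m → ZMod 2) := AddSubgroup.zmultiples 1

/-- The quotient `(ℤ/2ℤ)^m / Δ`. -/
abbrev Qt (m : ℕ) := (Fin m → ZMod 2) ⧸ Dl m

/-- Permutation of coordinates, as an additive homomorphism of `(ℤ/2ℤ)^m`. -/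
def permHom (m : ℕ) (σ : Equiv.Perm (Fin m)) : (Fin m → ZMod 2) →+ (Fin m → ZMod 2) where
  toFun f := f ∘ σ.symm
  map_zero' := rfl
  map_add' _ _ := rfl

lemma permHom_le (m : ℕ) (σ : Equiv.Perm (Fin m)) :
    Dl m ≤ (Dl m).comap (permHom m σ) := by
  intro f hf
  obtain ⟨k, hk⟩ := AddSubgroup.mem_zmultiples_iff.mp hf
  refine AddSubgroup.mem_zmultiples_iff.mpr ⟨k, ?_⟩
  subst hk
  rfl

/-- The induced additive homomorphism on the quotient `Qt m`. -/
def Qmap (m : ℕ) (σ : Equiv.Perm (Fin m)) : Qt m →+ Qt m :=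
  QuotientAddGroup.map (Dl m) (Dl m) (permHom m σ) (permHom_le m σ)

lemma Qmap_mk (m : ℕ) (σ : Equiv.Perm (Fin m)) (f : Fin m → ZMod 2) :
    Qmap m σ (QuotientAddGroup.mk f) = QuotientAddGroup.mk (f ∘ σ.symm) :=
  rfl

/-- The induced additive automorphism of the quotient `Qt m`. -/
def QAut (m : ℕ) (σ : Equiv.Perm (Fin m)) : Qt m ≃+ Qt m where
  toFun := Qmap m σ
  invFun := Qmap m σ⁻¹
  left_inv := by
    intro q
    induction q using QuotientAddGroup.induction_on with
    | H f =>
      rw [Qmap_mk, Qmap_mk]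
      congr 1
      funext i
      simp [Equiv.Perm.inv_def]
  right_inv := by
    intro q
    induction q using QuotientAddGroup.induction_on with
    | H f =>
      rw [Qmap_mk, Qmap_mk]
      congr 1
      funext i
      simp [Equiv.Perm.inv_def]
  map_add' := (Qmap m σ).map_add

/-- The action of `S_m` on the (multiplicative version of the) quotient `(ℤ/2ℤ)^m / Δ`
by permutation of coordinates. -/
def QAct (m : ℕ) : Equiv.Perm (Fin m) →* MulAut (Multiplicative (Qt m)) :=
  MonoidHom.mk' (fun σ => AddEquiv.toMultiplicative (QAut m σ)) (by
    intro σ τ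
    ext q
    induction q using QuotientAddGroup.induction_on with
    | H f =>
      show Qmap m (σ * τ) (QuotientAddGroup.mk f) =
        Qmap m σ (Qmap m τ (QuotientAddGroup.mk f))
      rw [Qmap_mk, Qmap_mk, Qmap_mk]
      rfl)

/-! ### Auxiliary material for `stmt_16` -/

section Aux

open Subgroup

lemma mem_Dl_iff (f : Fin 3 → ZMod 2) : f ∈ Dl 3 ↔ f = 0 ∨ f = 1 := by
  constructor
  · rintro ⟨k, rfl⟩
    rcases Int.even_or_odd k with ⟨m, rfl⟩ | ⟨m, rfl⟩
    · left
      show (m + m) • (1 : Fin 3 → ZMod 2) = 0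
      rw [add_zsmul]
      funext i
      exact CharTwo.add_self_eq_zero _
    · right
      show (2 * m + 1) • (1 : Fin 3 → ZMod 2) = 1
      rw [add_zsmul, two_mul, add_zsmul, one_zsmul]
      funext i
      show (m • (1 : Fin 3 → ZMod 2)) i + (m • (1 : Fin 3 → ZMod 2)) i + 1 = 1
      rw [CharTwo.add_self_eq_zero, zero_add]
  · rintro (rfl | rfl)
    · exact zero_mem _
    · exact AddSubgroup.mem_zmultiples _

instance : DecidablePred (· ∈ Dl 3) := fun f =>
  decidable_of_iff (f = 0 ∨ f = 1) (mem_Dl_iff f).symm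

instance : DecidableEq (Qt 3) := fun a b =>
  Quotient.recOnSubsingleton₂ a b fun x y =>
    decidable_of_iff (-x + y ∈ Dl 3) (QuotientAddGroup.eq).symm

instance : Fintype (Qt 3) :=
  Fintype.ofSurjective (QuotientAddGroup.mk (s := Dl 3)) Quot.mk_surjective

/-- The ambient group `G = F² ⋊ S₃`. -/
abbrev GG := SemidirectProduct (Multiplicative (Qt 3)) (Equiv.Perm (Fin 3)) (QAct 3)

def gEquiv : GG ≃ Multiplicative (Qt 3) × Equiv.Perm (Fin 3) where
  toFun x := (x.left, x.right)
  invFun p := ⟨p.1, p.2⟩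
  left_inv := fun ⟨_, _⟩ => rfl
  right_inv := fun ⟨_, _⟩ => rfl

instance : Fintype GG := Fintype.ofEquiv _ gEquiv.symm
instance : DecidableEq GG := gEquiv.decidableEq

lemma card_GG : Nat.card GG = 24 := by
  rw [Nat.card_eq_fintype_card]
  decide

instance : Fact (Nat.Prime 3) := ⟨by norm_num⟩

lemma fact24 : (Nat.card GG).factorization 3 = 1 := by
  rw [card_GG, show (24:ℕ) = 2^3 * 3 by norm_num,
    Nat.factorization_mul (by norm_num) (by norm_num),
    Nat.Prime.factorization_pow (by norm_num), Nat.Prime.factorization (by norm_num)]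
  simp [Finsupp.single_apply]

def cc : Equiv.Perm (Fin 3) := finRotate 3
def xx : GG := SemidirectProduct.inr cc
def ww : Multiplicative (Qt 3) :=
  Multiplicative.ofAdd (QuotientAddGroup.mk ![1, 1, 0])
def yy : GG := SemidirectProduct.inl ww * xx

lemma yy_not_mem : yy ∉ Subgroup.zpowers xx := by
  rw [Subgroup.mem_zpowers_iff]
  rintro ⟨k, hk⟩
  have h1 : (xx ^ k).left = 1 := by
    rw [show xx = SemidirectProduct.inr cc from rfl, ← map_zpow]
    exact SemidirectProduct.left_inr _
  rw [hk] at h1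
  exact (by decide : yy.left ≠ 1) h1

lemma orderOf_xx : orderOf xx = 3 := orderOf_eq_prime (by decide) (by decide)
lemma orderOf_yy : orderOf yy = 3 := orderOf_eq_prime (by decide) (by decide)

/-- The Sylow 3-subgroup generated by `xx`. -/
def S1 : Sylow 3 GG := Sylow.ofCard (Subgroup.zpowers xx)
  (by rw [Nat.card_zpowers, orderOf_xx, fact24, pow_one])

/-- The Sylow 3-subgroup generated by `yy`. -/
def S2 : Sylow 3 GG := Sylow.ofCard (Subgroup.zpowers yy)
  (by rw [Nat.card_zpowers, orderOf_yy, fact24, pow_one])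

lemma card_sylow_GG : Nat.card (Sylow 3 GG) = 4 := by
  have h1 : Nat.card (Sylow 3 GG) % 3 = 1 % 3 := card_sylow_modEq_one 3 GG
  have h2 := Sylow.card_dvd_index S1
  have hcard : Nat.card (S1 : Subgroup GG) = 3 := by
    rw [Sylow.card_eq_multiplicity, fact24, pow_one]
  have hidx : (S1 : Subgroup GG).index = 8 := by
    have h3 := Subgroup.card_mul_index (S1 : Subgroup GG)
    rw [hcard, card_GG] at h3
    omega
  rw [hidx] at h2
  have hne : Nat.card (Sylow 3 GG) ≠ 1 := by
    intro hone
    have hsub : Subsingleton (Sylow 3 GG) := (Nat.card_eq_one_iff_unique.mp hone).1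
    have hSS : S1 = S2 := Subsingleton.elim _ _
    have : Subgroup.zpowers xx = Subgroup.zpowers yy := by
      have := congrArg Sylow.toSubgroup hSS
      rwa [show S1.toSubgroup = Subgroup.zpowers xx from Sylow.coe_ofCard _ _,
        show S2.toSubgroup = Subgroup.zpowers yy from Sylow.coe_ofCard _ _] at this
    exact yy_not_mem (this ▸ Subgroup.mem_zpowers yy)
  have := Nat.le_of_dvd (by norm_num) h2
  interval_cases h : (Nat.card (Sylow 3 GG)) <;> omega

lemma le_normalizer_map_subtype {G : Type*} [Group G] (L : Subgroup G) (Q : Subgroup L)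
    (hQ : Q.Normal) : L ≤ Subgroup.normalizer ((Q.map L.subtype : Subgroup G) : Set G) := by
  intro h hh
  rw [Subgroup.mem_normalizer_iff]
  intro x
  constructor
  · rintro ⟨q, hq, rfl⟩
    refine ⟨⟨h, hh⟩ * q * ⟨h, hh⟩⁻¹, hQ.conj_mem q hq ⟨h, hh⟩, ?_⟩
    rw [map_mul, map_mul, map_inv]
    rfl
  · rintro ⟨q, hq, hq2⟩
    refine ⟨⟨h, hh⟩⁻¹ * q * ⟨h, hh⟩, ?_, ?_⟩
    · have := hQ.conj_mem q hq ⟨h, hh⟩⁻¹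
      rwa [inv_inv] at this
    · rw [map_mul, map_mul, map_inv]
      have hs : L.subtype ⟨h, hh⟩ = h := rfl
      rw [hs, hq2]
      group

set_option maxHeartbeats 1000000 in
lemma key (L : Subgroup GG) (hL : Nat.card L = 6) :
    ∃ S : Sylow 3 GG, Subgroup.normalizer ((S : Subgroup GG) : Set GG) = L := by
  obtain ⟨Q⟩ : Nonempty (Sylow 3 L) := Sylow.nonempty
  have hQcard : Nat.card (Q : Subgroup L) = 3 := by
    rw [Sylow.card_eq_multiplicity, hL, show (6:ℕ) = 2 * 3 by norm_num,
      Nat.factorization_mul (by norm_num) (by norm_num),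
      Nat.Prime.factorization (by norm_num), Nat.Prime.factorization (by norm_num)]
    simp [Finsupp.single_apply]
  have hQnormal : (Q : Subgroup L).Normal := by
    have hidx : (Q : Subgroup L).index = 2 := by
      have h3 := Subgroup.card_mul_index (Q : Subgroup L)
      rw [hQcard, hL] at h3
      omega
    have h1 : Nat.card (Sylow 3 L) % 3 = 1 % 3 := card_sylow_modEq_one 3 L
    have h2 := Sylow.card_dvd_index Q
    rw [hidx] at h2
    have hone : Nat.card (Sylow 3 L) = 1 := by
      rcases (Nat.dvd_prime Nat.prime_two).mp h2 with h | h <;> omega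
    have hsub : Subsingleton (Sylow 3 L) := (Nat.card_eq_one_iff_unique.mp hone).1
    rw [← Subgroup.normalizer_eq_top_iff, eq_top_iff]
    intro h _
    exact Sylow.smul_eq_iff_mem_normalizer.mp (Subsingleton.elim (h • Q) Q)
  set P : Subgroup GG := (Q : Subgroup L).map L.subtype with hP
  have hPcard : Nat.card P = 3 :=
    (Nat.card_congr
      ((Subgroup.equivMapOfInjective _ L.subtype L.subtype_injective).toEquiv)).symm.trans hQcard
  refine ⟨Sylow.ofCard P (by rw [hPcard, fact24, pow_one]), ?_⟩
  rw [Sylow.coe_ofCard]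
  have hle : L ≤ Subgroup.normalizer (P : Set GG) := le_normalizer_map_subtype L (Q : Subgroup L) hQnormal
  have hNcard : Nat.card (Subgroup.normalizer (P : Set GG)) = 6 := by
    have h1 := Sylow.card_eq_index_normalizer (Sylow.ofCard P (by rw [hPcard, fact24, pow_one]))
    rw [card_sylow_GG] at h1
    change 4 = (Subgroup.normalizer (P : Set GG)).index at h1
    have h2 := Subgroup.card_mul_index (Subgroup.normalizer (P : Set GG))
    rw [card_GG, ← h1] at h2
    omega
  exact (Subgroup.eq_of_le_of_card_ge hle (by rw [hNcard, hL])).symm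

end Aux

/-- In `G = F² ⋊ S₃`, where `F² = F³/Δ` carries the permutation action of `S₃`,
any two subgroups of order 6 are conjugate. -/
theorem stmt_16
    (H K : Subgroup (SemidirectProduct (Multiplicative (Qt 3)) (Equiv.Perm (Fin 3)) (QAct 3)))
    (hH : Nat.card H = 6) (hK : Nat.card K = 6) :
    ∃ g : SemidirectProduct (Multiplicative (Qt 3)) (Equiv.Perm (Fin 3)) (QAct 3),
      K = H.map (MulAut.conj g).toMonoidHom := by
  obtain ⟨SH, hSH⟩ := key H hH
  obtain ⟨SK, hSK⟩ := key K hK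
  obtain ⟨g, hg⟩ := MulAction.exists_smul_eq
    (SemidirectProduct (Multiplicative (Qt 3)) (Equiv.Perm (Fin 3)) (QAct 3)) SH SK
  refine ⟨g, ?_⟩
  calc K = Subgroup.normalizer ((SK : Subgroup GG) : Set GG) := hSK.symm
    _ = Subgroup.normalizer (((g • SH : Sylow 3 GG) : Subgroup GG) : Set GG) := by rw [hg]
    _ = Subgroup.normalizer (((SH : Subgroup GG).map (MulAut.conj g).toMonoidHom : Subgroup GG) : Set GG) := rfl
    _ = (Subgroup.normalizer ((SH : Subgroup GG) : Set GG)).map (MulAut.conj g).toMonoidHom :=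
        (Subgroup.map_equiv_normalizer_eq _ (MulAut.conj g)).symm
    _ = H.map (MulAut.conj g).toMonoidHom := by rw [hSH]
end
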